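/- For any (r_0,r_1,…,r_{q−1}) ∈ ℤ^q and t ∈ ℤ, one has #Ω_{(r_0,r_1,…,r_{q−1}),t} = #Ω_{(r_0,r_1,…,r_{q−1}),t−1} + 1 if and only if Σ_{μ=1}^{q−1} ⌈(q^{n−3}t − r_μ)/(m(q+1))⌉ + q(q−1)·⌈q^{n−3}t/m⌉ ≤ t + (r_0 − q^{n−3}t)/(m(q+1)), equivalently m(q+1)·Σ_{μ=1}^{q−1} ⌈(q^{n−3}t − r_μ)/(m(q+1))⌉ + mq(q²−1)·⌈q^{n−3}t/m⌉ ≤ r_0 + (q^n + 1 − q^{n−3})·t. -/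

import Mathlib

/-- The lattice point set `Ω_{r,s,t}` associated with the GGS curve:
triples `(i, j, k)` with `i + r 0 ≥ 0`, `0 ≤ i + m(q+1) j_μ + r_μ < m(q+1)` for
`μ = 1, …, q-1`, `0 ≤ i + m k_ν + s_ν < m` for `ν = 1, …, q²-1`, and
`q³ i + m(q+1)|j| + m q |k| ≤ t`. -/
def OmegaSet (q : ℕ) (hq : 0 < q) (m : ℤ) (r : Fin q → ℤ) (s : Fin (q ^ 2 - 1) → ℤ)
    (t : ℤ) : Set (ℤ × (Fin (q - 1) → ℤ) × (Fin (q ^ 2 - 1) → ℤ)) :=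
  {p | 0 ≤ p.1 + r ⟨0, hq⟩ ∧
    (∀ μ : Fin (q - 1),
      0 ≤ p.1 + m * ((q : ℤ) + 1) * p.2.1 μ + r ⟨μ.val + 1, by have := μ.isLt; omega⟩ ∧
      p.1 + m * ((q : ℤ) + 1) * p.2.1 μ + r ⟨μ.val + 1, by have := μ.isLt; omega⟩
        < m * ((q : ℤ) + 1)) ∧
    (∀ ν : Fin (q ^ 2 - 1), 0 ≤ p.1 + m * p.2.2 ν + s ν ∧ p.1 + m * p.2.2 ν + s ν < m) ∧
    (q : ℤ) ^ 3 * p.1 + m * ((q : ℤ) + 1) * (∑ μ, p.2.1 μ)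
      + m * (q : ℤ) * (∑ ν, p.2.2 ν) ≤ t}


private lemma myceil_div (a b : ℤ) (hb : 0 < b) : ⌈(a : ℚ) / (b : ℚ)⌉ = -((-a) / b) := by
  obtain ⟨d, rfl⟩ : ∃ d : ℕ, b = (d : ℤ) := ⟨b.toNat, (Int.toNat_of_nonneg hb.le).symm⟩
  rw [show ((a : ℚ)) / ((d : ℤ) : ℚ) = -(((-a : ℤ) : ℚ) / ((d : ℕ) : ℚ)) by push_cast; ring,
    Int.ceil_neg, Rat.floor_intCast_div_natCast]

private def Wfun (q : ℕ) (m : ℤ) (r' : Fin (q - 1) → ℤ) (i : ℤ) : ℤ :=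
  (q : ℤ) ^ 3 * i + m * ((q : ℤ) + 1) * (∑ μ, -((i + r' μ) / (m * ((q : ℤ) + 1))))
    + m * (q : ℤ) * (((q : ℤ) ^ 2 - 1) * (-(i / m)))

private lemma Wfun_add (q : ℕ) (m : ℤ) (r' : Fin (q - 1) → ℤ) (hq : 1 ≤ q) (hm : 0 < m)
    (i : ℤ) :
    Wfun q m r' (i + m * ((q : ℤ) + 1)) = Wfun q m r' i + m * ((q : ℤ) + 1) := by
  have hQ0 : (0 : ℤ) < (q : ℤ) + 1 := by positivity
  have hP : m * ((q : ℤ) + 1) ≠ 0 := by positivity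
  have h1 : ∀ μ : Fin (q - 1), (i + m * ((q : ℤ) + 1) + r' μ) / (m * ((q : ℤ) + 1))
      = (i + r' μ) / (m * ((q : ℤ) + 1)) + 1 := by
    intro μ
    rw [show i + m * ((q : ℤ) + 1) + r' μ = i + r' μ + m * ((q : ℤ) + 1) * 1 by ring,
      Int.add_mul_ediv_left _ _ hP]
  have h2 : (i + m * ((q : ℤ) + 1)) / m = i / m + ((q : ℤ) + 1) := by
    rw [Int.add_mul_ediv_left _ _ hm.ne']
  unfold Wfun
  rw [h2]
  simp only [h1, neg_add]
  rw [Finset.sum_add_distrib, Finset.sum_const, Finset.card_univ, Fintype.card_fin,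
    nsmul_eq_mul, Nat.cast_sub hq, Nat.cast_one]
  ring

private lemma Wfun_add_mul (q : ℕ) (m : ℤ) (r' : Fin (q - 1) → ℤ) (hq : 1 ≤ q) (hm : 0 < m)
    (i : ℤ) (l : ℤ) :
    Wfun q m r' (i + m * ((q : ℤ) + 1) * l) = Wfun q m r' i + m * ((q : ℤ) + 1) * l := by
  induction l using Int.induction_on with
  | zero => simp
  | succ k ih =>
      have := Wfun_add q m r' hq hm (i + m * ((q : ℤ) + 1) * k)
      rw [show i + m * ((q : ℤ) + 1) * ((k : ℤ) + 1)
        = i + m * ((q : ℤ) + 1) * k + m * ((q : ℤ) + 1) by ring, this, ih]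
      ring
  | pred k ih =>
      have := Wfun_add q m r' hq hm (i + m * ((q : ℤ) + 1) * (-(k : ℤ) - 1))
      rw [show i + m * ((q : ℤ) + 1) * (-(k : ℤ) - 1) + m * ((q : ℤ) + 1)
        = i + m * ((q : ℤ) + 1) * (-(k : ℤ)) by ring, ih] at this
      linarith

private lemma Wfun_dvd (q : ℕ) (m : ℤ) (r' : Fin (q - 1) → ℤ) (i : ℤ) :
    m * ((q : ℤ) + 1) ∣ Wfun q m r' i - (q : ℤ) ^ 3 * i :=
  ⟨(∑ μ, -((i + r' μ) / (m * ((q : ℤ) + 1)))) + (q : ℤ) * ((q : ℤ) - 1) * (-(i / m)), by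
    unfold Wfun; ring⟩

private lemma Wfun_lb (q : ℕ) (m : ℤ) (r' : Fin (q - 1) → ℤ) (hq : 1 ≤ q) (hm : 0 < m)
    (i : ℤ) : i - (∑ μ, r' μ) ≤ Wfun q m r' i := by
  have hQ1 : (1 : ℤ) ≤ (q : ℤ) := by exact_mod_cast hq
  have hP : m * ((q : ℤ) + 1) ≠ 0 := by positivity
  have hS : ∑ μ : Fin (q - 1), -(i + r' μ)
      ≤ m * ((q : ℤ) + 1) * ∑ μ, -((i + r' μ) / (m * ((q : ℤ) + 1))) := by
    rw [Finset.mul_sum]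
    apply Finset.sum_le_sum
    intro μ _
    have h := Int.ediv_mul_le (i + r' μ) hP
    nlinarith [h]
  have hS2 : ∑ μ : Fin (q - 1), -(i + r' μ) = -(((q : ℤ) - 1) * i) - ∑ μ, r' μ := by
    simp only [neg_add]
    rw [Finset.sum_add_distrib, Finset.sum_const, Finset.card_univ, Fintype.card_fin,
      nsmul_eq_mul, Nat.cast_sub hq, Nat.cast_one, Finset.sum_neg_distrib]
    ring
  have hk : -((q : ℤ) * ((q : ℤ) ^ 2 - 1) * i) ≤ m * (q : ℤ) * (((q : ℤ) ^ 2 - 1) * (-(i / m))) := by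
    have h := Int.ediv_mul_le i hm.ne'
    have h2 : (0 : ℤ) ≤ (q : ℤ) * ((q : ℤ) ^ 2 - 1) := by nlinarith
    have h3 := mul_le_mul_of_nonneg_left (neg_le_neg h) h2
    nlinarith [h3]
  unfold Wfun
  rw [hS2] at hS
  nlinarith [hS, hk]

private lemma OmegaSet_eq_image (q : ℕ) (hqpos : 0 < q) (m : ℤ) (hm : 0 < m) (r : Fin q → ℤ)
    (u : ℤ) :
    OmegaSet q hqpos m r (fun _ => 0) u
      = (fun i : ℤ => ((i,
          fun μ : Fin (q - 1) =>
            -((i + r ⟨μ.val + 1, by have := μ.isLt; omega⟩) / (m * ((q : ℤ) + 1))),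
          fun _ : Fin (q ^ 2 - 1) => -(i / m)) :
            ℤ × (Fin (q - 1) → ℤ) × (Fin (q ^ 2 - 1) → ℤ))) ''
        {i : ℤ | -(r ⟨0, hqpos⟩) ≤ i ∧
          Wfun q m (fun μ => r ⟨μ.val + 1, by have := μ.isLt; omega⟩) i ≤ u} := by
  have hq1 : 1 ≤ q := hqpos
  have hP0 : (0 : ℤ) < m * ((q : ℤ) + 1) := by positivity
  have hq2 : ((q ^ 2 - 1 : ℕ) : ℤ) = (q : ℤ) ^ 2 - 1 := by
    have h1 : 1 ≤ q ^ 2 := Nat.one_le_pow _ _ hqpos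
    rw [Nat.cast_sub h1]; push_cast; ring
  ext p
  simp only [OmegaSet, Set.mem_setOf_eq, Set.mem_image]
  constructor
  · rintro ⟨h0, hj, hk, hw⟩
    have hj' : ∀ μ : Fin (q - 1),
        p.2.1 μ = -((p.1 + r ⟨μ.val + 1, by have := μ.isLt; omega⟩) / (m * ((q : ℤ) + 1))) := by
      intro μ
      obtain ⟨ha, hb⟩ := hj μ
      have e1 : (p.1 + r ⟨μ.val + 1, by have := μ.isLt; omega⟩ + m * ((q : ℤ) + 1) * p.2.1 μ)
            / (m * ((q : ℤ) + 1))
          = (p.1 + r ⟨μ.val + 1, by have := μ.isLt; omega⟩) / (m * ((q : ℤ) + 1)) + p.2.1 μ :=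
        Int.add_mul_ediv_left _ _ hP0.ne'
      have e2 : (p.1 + r ⟨μ.val + 1, by have := μ.isLt; omega⟩ + m * ((q : ℤ) + 1) * p.2.1 μ)
          / (m * ((q : ℤ) + 1)) = 0 :=
        Int.ediv_eq_zero_of_lt (by linarith) (by linarith)
      omega
    have hk' : ∀ ν : Fin (q ^ 2 - 1), p.2.2 ν = -(p.1 / m) := by
      intro ν
      obtain ⟨ha, hb⟩ := hk ν
      have e1 : (p.1 + m * p.2.2 ν) / m = p.1 / m + p.2.2 ν := Int.add_mul_ediv_left _ _ hm.ne'
      have e2 : (p.1 + m * p.2.2 ν) / m = 0 :=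
        Int.ediv_eq_zero_of_lt (by linarith) (by linarith)
      omega
    have hsum1 : ∑ μ, p.2.1 μ
        = ∑ μ : Fin (q - 1),
            -((p.1 + r ⟨μ.val + 1, by have := μ.isLt; omega⟩) / (m * ((q : ℤ) + 1))) :=
      Finset.sum_congr rfl fun μ _ => hj' μ
    have hsum2 : ∑ ν, p.2.2 ν = ((q : ℤ) ^ 2 - 1) * (-(p.1 / m)) := by
      rw [Finset.sum_congr rfl fun ν _ => hk' ν, Finset.sum_const, Finset.card_univ,
        Fintype.card_fin, nsmul_eq_mul, hq2]
    rw [hsum1, hsum2] at hw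
    refine ⟨p.1, ⟨by linarith, ?_⟩, ?_⟩
    · simp only [Wfun]
      linarith [hw]
    · refine Prod.ext rfl (Prod.ext ?_ ?_)
      · funext μ; exact (hj' μ).symm
      · funext ν; exact (hk' ν).symm
  · rintro ⟨i, ⟨hi1, hi2⟩, rfl⟩
    simp only
    refine ⟨by linarith, fun μ => ?_, fun ν => ?_, ?_⟩
    · have h1 := Int.emod_nonneg (i + r ⟨μ.val + 1, by have := μ.isLt; omega⟩) hP0.ne'
      have h2 := Int.emod_lt_of_pos (i + r ⟨μ.val + 1, by have := μ.isLt; omega⟩) hP0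
      have h3 := Int.emod_def (i + r ⟨μ.val + 1, by have := μ.isLt; omega⟩) (m * ((q : ℤ) + 1))
      constructor <;> linarith
    · have h1 := Int.emod_nonneg i hm.ne'
      have h2 := Int.emod_lt_of_pos i hm
      have h3 := Int.emod_def i m
      constructor <;> linarith
    · have hsum2 : ∑ _ν : Fin (q ^ 2 - 1), -(i / m) = ((q : ℤ) ^ 2 - 1) * (-(i / m)) := by
        rw [Finset.sum_const, Finset.card_univ, Fintype.card_fin, nsmul_eq_mul, hq2]
      simp only [Wfun] at hi2
      rw [hsum2]
      linarith [hi2]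

private lemma ncard_S_step (q : ℕ) (m : ℤ) (r' : Fin (q - 1) → ℤ) (r0 : ℤ)
    (hq : 1 ≤ q) (hm : 0 < m) (t istar : ℤ)
    (hWs : Wfun q m r' istar = t) (huniq : ∀ i : ℤ, Wfun q m r' i = t → i = istar) :
    {i : ℤ | -r0 ≤ i ∧ Wfun q m r' i ≤ t}.ncard
      = {i : ℤ | -r0 ≤ i ∧ Wfun q m r' i ≤ t - 1}.ncard
        + (if -r0 ≤ istar then 1 else 0) := by
  have hfin : ∀ u : ℤ, {i : ℤ | -r0 ≤ i ∧ Wfun q m r' i ≤ u}.Finite := by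
    intro u
    apply (Set.finite_Icc (-r0) (u + ∑ μ, r' μ)).subset
    rintro i ⟨h1, h2⟩
    exact ⟨h1, by have := Wfun_lb q m r' hq hm i; linarith⟩
  have hsplit : {i : ℤ | -r0 ≤ i ∧ Wfun q m r' i ≤ t}
      = {i : ℤ | -r0 ≤ i ∧ Wfun q m r' i ≤ t - 1} ∪ {i : ℤ | -r0 ≤ i ∧ Wfun q m r' i = t} := by
    ext i; simp only [Set.mem_setOf_eq, Set.mem_union]; omega
  have hdisj : Disjoint {i : ℤ | -r0 ≤ i ∧ Wfun q m r' i ≤ t - 1}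
      {i : ℤ | -r0 ≤ i ∧ Wfun q m r' i = t} := by
    rw [Set.disjoint_left]; rintro i ⟨h1, h2⟩ ⟨h3, h4⟩; omega
  have hE : {i : ℤ | -r0 ≤ i ∧ Wfun q m r' i = t}
      = if -r0 ≤ istar then {istar} else ∅ := by
    split_ifs with h
    · ext i
      simp only [Set.mem_setOf_eq, Set.mem_singleton_iff]
      constructor
      · rintro ⟨h1, h2⟩; exact huniq i h2
      · rintro rfl; exact ⟨h, hWs⟩
    · ext i
      simp only [Set.mem_setOf_eq, Set.mem_empty_iff_false, iff_false, not_and]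
      intro h1 h2
      exact h ((huniq i h2) ▸ h1)
  have hEfin : {i : ℤ | -r0 ≤ i ∧ Wfun q m r' i = t}.Finite := by
    rw [hE]; split_ifs <;> simp
  rw [hsplit, Set.ncard_union_eq hdisj (hfin (t - 1)) hEfin, hE]
  split_ifs <;> simp

/-- `#Ω_{(r₀,…,r_(q-1)),t} = #Ω_{(r₀,…,r_(q-1)),t-1} + 1` iff
`m(q+1)·Σ_μ ⌈(q^(n-3) t - r_μ)/(m(q+1))⌉ + m q (q²-1)·⌈q^(n-3) t/m⌉
  ≤ r₀ + (q^n + 1 - q^(n-3)) t`. -/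
theorem card_OmegaSet_sub_one_t (q n : ℕ) (hq : IsPrimePow q) (hn : Odd n) (hn1 : 1 < n)
    (m : ℤ) (hm : m * ((q : ℤ) + 1) = (q : ℤ) ^ n + 1)
    (r : Fin q → ℤ) (t : ℤ) :
    (OmegaSet q hq.pos m r (fun _ => 0) t).ncard
        = (OmegaSet q hq.pos m r (fun _ => 0) (t - 1)).ncard + 1 ↔
      m * ((q : ℤ) + 1) *
          (∑ μ : Fin (q - 1),
            ⌈(((q : ℤ) ^ (n - 3) * t - r ⟨μ.val + 1, by have := μ.isLt; omega⟩ : ℤ) : ℚ)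
              / ((m * ((q : ℤ) + 1) : ℤ) : ℚ)⌉)
        + m * (q : ℤ) * ((q : ℤ) ^ 2 - 1) * ⌈(((q : ℤ) ^ (n - 3) * t : ℤ) : ℚ) / ((m : ℤ) : ℚ)⌉
        ≤ r ⟨0, hq.pos⟩ + ((q : ℤ) ^ n + 1 - (q : ℤ) ^ (n - 3)) * t := by
  have hq1 : 1 ≤ q := hq.pos
  have hn3 : 3 ≤ n := by obtain ⟨k, hk⟩ := hn; omega
  have hQ1 : (1 : ℤ) ≤ (q : ℤ) := by exact_mod_cast hq1
  have hP0 : (0 : ℤ) < m * ((q : ℤ) + 1) := by rw [hm]; positivity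
  have hm0 : (0 : ℤ) < m := by nlinarith
  have hQn : (q : ℤ) ^ (n - 3) * (q : ℤ) ^ 3 = (q : ℤ) ^ n := by
    rw [← pow_add]; congr 1; omega
  set r'' : Fin (q - 1) → ℤ := fun μ => r ⟨μ.val + 1, by have := μ.isLt; omega⟩ with hr''
  set istar : ℤ := -((q : ℤ) ^ (n - 3) * t) + m * ((q : ℤ) + 1) *
      (t - (∑ μ, -((-((q : ℤ) ^ (n - 3) * t) + r'' μ) / (m * ((q : ℤ) + 1))))
         - (q : ℤ) * ((q : ℤ) - 1) * (-((-((q : ℤ) ^ (n - 3) * t)) / m))) with histar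
  have hWs : Wfun q m r'' istar = t := by
    rw [histar, Wfun_add_mul q m r'' hq1 hm0]
    simp only [Wfun]
    linear_combination t * hm - t * hQn
  have huniq : ∀ i : ℤ, Wfun q m r'' i = t → i = istar := by
    intro i hi
    have h1 := Wfun_dvd q m r'' i
    have h2 := Wfun_dvd q m r'' istar
    rw [hi] at h1
    rw [hWs] at h2
    have h3 : m * ((q : ℤ) + 1) ∣ (q : ℤ) ^ 3 * (istar - i) := by
      have h := h1.sub h2
      have e : (t - (q : ℤ) ^ 3 * i) - (t - (q : ℤ) ^ 3 * istar) = (q : ℤ) ^ 3 * (istar - i) := by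
        ring
      rwa [e] at h
    have h4 : m * ((q : ℤ) + 1) ∣ istar - i := by
      have h5 : m * ((q : ℤ) + 1) ∣ (q : ℤ) ^ (n - 3) * ((q : ℤ) ^ 3 * (istar - i)) :=
        Dvd.dvd.mul_left h3 _
      have h6 : m * ((q : ℤ) + 1) ∣ m * ((q : ℤ) + 1) * (istar - i) := Dvd.intro _ rfl
      have e : m * ((q : ℤ) + 1) * (istar - i)
          - (q : ℤ) ^ (n - 3) * ((q : ℤ) ^ 3 * (istar - i)) = istar - i := by
        linear_combination (istar - i) * hm - (istar - i) * hQn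
      have h7 := h6.sub h5
      rwa [e] at h7
    obtain ⟨d, hd⟩ := h4
    have he : istar = i + m * ((q : ℤ) + 1) * d := by linarith
    have hWs' := hWs
    rw [he, Wfun_add_mul q m r'' hq1 hm0, hi] at hWs'
    have hd0 : m * ((q : ℤ) + 1) * d = 0 := by linarith
    rcases mul_eq_zero.mp hd0 with h | h
    · exact absurd h hP0.ne'
    · rw [h] at he; linarith
  have hFinj : Function.Injective (fun i : ℤ => ((i,
      fun μ : Fin (q - 1) =>
        -((i + r ⟨μ.val + 1, by have := μ.isLt; omega⟩) / (m * ((q : ℤ) + 1))),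
      fun _ : Fin (q ^ 2 - 1) => -(i / m)) :
        ℤ × (Fin (q - 1) → ℤ) × (Fin (q ^ 2 - 1) → ℤ))) :=
    fun a b hab => congrArg Prod.fst hab
  rw [OmegaSet_eq_image q hq.pos m hm0 r t, OmegaSet_eq_image q hq.pos m hm0 r (t - 1),
    Set.ncard_image_of_injective _ hFinj, Set.ncard_image_of_injective _ hFinj,
    ncard_S_step q m (fun μ => r ⟨μ.val + 1, by have := μ.isLt; omega⟩) (r ⟨0, hq.pos⟩)
      hq1 hm0 t istar hWs huniq]
  have hceil1 : ∀ μ : Fin (q - 1),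
      ⌈(((q : ℤ) ^ (n - 3) * t - r ⟨μ.val + 1, by have := μ.isLt; omega⟩ : ℤ) : ℚ)
          / ((m * ((q : ℤ) + 1) : ℤ) : ℚ)⌉
        = -((-((q : ℤ) ^ (n - 3) * t) + r'' μ) / (m * ((q : ℤ) + 1))) := by
    intro μ
    rw [myceil_div _ _ hP0]
    congr 2
    ring
  have hceil0 : ⌈(((q : ℤ) ^ (n - 3) * t : ℤ) : ℚ) / ((m : ℤ) : ℚ)⌉
      = -((-((q : ℤ) ^ (n - 3) * t)) / m) := myceil_div _ _ hm0
  have hsum : (∑ μ : Fin (q - 1),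
        ⌈(((q : ℤ) ^ (n - 3) * t - r ⟨μ.val + 1, by have := μ.isLt; omega⟩ : ℤ) : ℚ)
          / ((m * ((q : ℤ) + 1) : ℤ) : ℚ)⌉)
      = ∑ μ : Fin (q - 1), -((-((q : ℤ) ^ (n - 3) * t) + r'' μ) / (m * ((q : ℤ) + 1))) :=
    Finset.sum_congr rfl fun μ _ => hceil1 μ
  rw [hsum, hceil0]
  have hbridge : m * ((q : ℤ) + 1) *
        (∑ μ : Fin (q - 1), -((-((q : ℤ) ^ (n - 3) * t) + r'' μ) / (m * ((q : ℤ) + 1))))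
      + m * (q : ℤ) * ((q : ℤ) ^ 2 - 1) * (-((-((q : ℤ) ^ (n - 3) * t)) / m)) + istar
      = ((q : ℤ) ^ n + 1 - (q : ℤ) ^ (n - 3)) * t := by
    rw [histar]
    linear_combination t * hm
  split_ifs with hcase
  · constructor
    · intro _; linarith [hbridge]
    · intro _; rfl
  · constructor
    · intro h; omega
    · intro h
      exact absurd (by linarith [hbridge] : -(r ⟨0, hq.pos⟩) ≤ istar) hcase
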